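/- Let σ = co({x_j}_{j=0}^n) ⊂ ℝ^n be a simplex with affinely independent vertices, let g : ℝ^n → ℝ^n be twice continuously differentiable on an open set containing σ, and let β ≥ 0 satisfy |∂²g^{(p)}/∂x^{(q)}∂x^{(r)}(ξ)| ≤ β for all ξ ∈ σ and all p, q, r. Let V : ℝ^n → ℝ be affine with gradient ∇V, let l ∈ ℝ^n satisfy l ≥ |∇V| entrywise, and let b₂ ∈ ℝ. Suppose V(x_j) ≥ 0 for every vertex and that at every vertex j the per-vertex inequality g(x_j)ᵀ∇V + c_j β 1_nᵀ l ≤ −b₂ V(x_j) holds. Then the Dini derivative of V along g satisfies D⁺V(x) ≤ −b₂ V(x) for every x ∈ σ. -/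

import Mathlib

open Filter Topology Set
open scoped BigOperators

/-- Second partial derivative `∂²φ/∂x^{(q)}∂x^{(r)}` of a scalar function on ℝⁿ. -/
noncomputable def secondPartial {n : ℕ} (φ : EuclideanSpace ℝ (Fin n) → ℝ) (q r : Fin n)
    (ξ : EuclideanSpace ℝ (Fin n)) : ℝ :=
  fderiv ℝ (fun y => fderiv ℝ φ y (EuclideanSpace.single r 1)) ξ (EuclideanSpace.single q 1)

/-- Dini derivative of `V` at `y` along the vector field `g`. -/
noncomputable def diniDeriv {n : ℕ} (V : EuclideanSpace ℝ (Fin n) → ℝ)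
    (g : EuclideanSpace ℝ (Fin n) → EuclideanSpace ℝ (Fin n))
    (y : EuclideanSpace ℝ (Fin n)) : EReal :=
  Filter.limsup (fun h : ℝ => (((V (y + h • g y) - V y) / h : ℝ) : EReal)) (𝓝[>] (0 : ℝ))

section Aux

variable {n : ℕ}

lemma l1_bound (z : EuclideanSpace ℝ (Fin n)) : (∑ i, |z i|)^2 ≤ (n : ℝ) * ‖z‖^2 := by
  have h := Finset.sum_mul_sq_le_sq_mul_sq Finset.univ (fun i => |z i|) (fun _ => (1:ℝ))
  simp only [mul_one, one_pow, Finset.sum_const, Finset.card_univ, Fintype.card_fin,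
    nsmul_eq_mul] at h
  have hn : ‖z‖^2 = ∑ i, |z i|^2 := by
    rw [EuclideanSpace.norm_eq, Real.sq_sqrt (by positivity)]
    simp [sq_abs]
  rw [hn]; linarith

lemma eq_sum_single (z : EuclideanSpace ℝ (Fin n)) :
    z = ∑ i, z i • EuclideanSpace.single i (1:ℝ) := by
  ext j
  rw [WithLp.ofLp_sum, Finset.sum_apply]
  simp [EuclideanSpace.single_apply]

lemma secondPartial_eq (φ : EuclideanSpace ℝ (Fin n) → ℝ) (q r : Fin n)
    (ξ : EuclideanSpace ℝ (Fin n)) (hd : DifferentiableAt ℝ (fderiv ℝ φ) ξ) :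
    secondPartial φ q r ξ
      = fderiv ℝ (fderiv ℝ φ) ξ (EuclideanSpace.single q 1) (EuclideanSpace.single r 1) := by
  unfold secondPartial
  have : (fun y => fderiv ℝ φ y (EuclideanSpace.single r 1))
      = (ContinuousLinearMap.apply ℝ ℝ ((EuclideanSpace.single r 1 : EuclideanSpace ℝ (Fin n)))) ∘
        (fderiv ℝ φ) := rfl
  rw [this, fderiv_comp _ (ContinuousLinearMap.differentiableAt _) hd]
  simp

lemma hess_bound (φ : EuclideanSpace ℝ (Fin n) → ℝ) (ξ : EuclideanSpace ℝ (Fin n))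
    (hd : DifferentiableAt ℝ (fderiv ℝ φ) ξ) (β : ℝ) (hβ0 : 0 ≤ β)
    (hβ : ∀ q r : Fin n, |secondPartial φ q r ξ| ≤ β)
    (z : EuclideanSpace ℝ (Fin n)) :
    |fderiv ℝ (fderiv ℝ φ) ξ z z| ≤ β * ((n:ℝ) * ‖z‖^2) := by
  set H := fderiv ℝ (fderiv ℝ φ) ξ with hH
  have hz := eq_sum_single z
  have step1 : H z = ∑ q, z q • H (EuclideanSpace.single q 1) := by
    conv_lhs => rw [hz]
    simp only [map_sum, map_smul]
  have step2 : ∀ q : Fin n, H (EuclideanSpace.single q 1) z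
      = ∑ r, z r * H (EuclideanSpace.single q 1) (EuclideanSpace.single r 1) := by
    intro q
    conv_lhs => rw [hz]
    simp only [map_sum, map_smul, smul_eq_mul]
  have hexp : H z z = ∑ q, ∑ r, z q * (z r *
      H (EuclideanSpace.single q 1) (EuclideanSpace.single r 1)) := by
    conv_lhs => rw [step1]
    rw [ContinuousLinearMap.sum_apply]
    refine Finset.sum_congr rfl fun q _ => ?_
    rw [ContinuousLinearMap.smul_apply, smul_eq_mul, step2, Finset.mul_sum]
  rw [hexp]
  calc |∑ q, ∑ r, z q * (z r * H (EuclideanSpace.single q 1) (EuclideanSpace.single r 1))|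
      ≤ ∑ q, ∑ r : Fin n, |z q| * (|z r| * β) := by
        refine (Finset.abs_sum_le_sum_abs _ _).trans (Finset.sum_le_sum fun q _ => ?_)
        refine (Finset.abs_sum_le_sum_abs _ _).trans (Finset.sum_le_sum fun r _ => ?_)
        rw [abs_mul, abs_mul]
        have := hβ q r
        rw [secondPartial_eq φ q r ξ hd] at this
        exact mul_le_mul_of_nonneg_left
          (mul_le_mul_of_nonneg_left this (abs_nonneg _)) (abs_nonneg _)
    _ = β * (∑ q, |z q|)^2 := by
        simp only [← Finset.sum_mul, ← Finset.mul_sum]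
        ring
    _ ≤ β * ((n:ℝ) * ‖z‖^2) := mul_le_mul_of_nonneg_left (l1_bound z) hβ0

lemma decr_aux (f f' : ℝ → ℝ) (hf : ∀ t ∈ Icc (0:ℝ) 1, HasDerivAt f (f' t) t)
    (hf' : ∀ t ∈ Ioo (0:ℝ) 1, f' t ≤ 0) : ∀ t ∈ Icc (0:ℝ) 1, f t ≤ f 0 := by
  have hanti : AntitoneOn f (Icc 0 1) := by
    refine antitoneOn_of_deriv_nonpos (convex_Icc 0 1)
      (fun t ht => (hf t ht).continuousAt.continuousWithinAt) ?_ ?_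
    · intro t ht
      rw [interior_Icc] at ht
      exact ((hf t (Ioo_subset_Icc_self ht)).differentiableAt).differentiableWithinAt
    · intro t ht
      rw [interior_Icc] at ht
      rw [(hf t (Ioo_subset_Icc_self ht)).deriv]
      exact hf' t ht
  intro t ht
  exact hanti (left_mem_Icc.2 zero_le_one) ht ht.1

lemma taylor_key (φ : EuclideanSpace ℝ (Fin n) → ℝ) (U : Set (EuclideanSpace ℝ (Fin n)))
    (hU : IsOpen U) (hφ : ContDiffOn ℝ 2 φ U)
    (s : Set (EuclideanSpace ℝ (Fin n))) (hconv : Convex ℝ s) (hsU : s ⊆ U)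
    (a b : EuclideanSpace ℝ (Fin n)) (ha : a ∈ s) (hb : b ∈ s)
    (M : ℝ)
    (hM : ∀ ξ ∈ s, |fderiv ℝ (fderiv ℝ φ) ξ (b - a) (b - a)| ≤ M) :
    |φ b - φ a - fderiv ℝ φ a (b - a)| ≤ M / 2 := by
  set z := b - a with hzdef
  set γ : ℝ → EuclideanSpace ℝ (Fin n) := fun t => a + t • z with hγdef
  have hγs : ∀ t ∈ Icc (0:ℝ) 1, γ t ∈ s := fun t ht => hconv.add_smul_sub_mem ha hb ht
  have hγd : ∀ t : ℝ, HasDerivAt γ z t := by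
    intro t
    have h1 : HasDerivAt (fun t : ℝ => t • z) ((1:ℝ) • z) t := (hasDerivAt_id t).smul_const z
    have h2 := h1.const_add a
    rw [one_smul] at h2
    exact h2
  have hφdiff : DifferentiableOn ℝ φ U := hφ.differentiableOn (by norm_num)
  have hF : ContDiffOn ℝ 1 (fderiv ℝ φ) U := hφ.fderiv_of_isOpen hU (by norm_num)
  have hFdiff : DifferentiableOn ℝ (fderiv ℝ φ) U := hF.differentiableOn (by norm_num)
  set ψ : ℝ → ℝ := fun t => φ (γ t) with hψdef
  set ψ₁ : ℝ → ℝ := fun t => fderiv ℝ φ (γ t) z with hψ₁def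
  have hmemU : ∀ t ∈ Icc (0:ℝ) 1, γ t ∈ U := fun t ht => hsU (hγs t ht)
  have hψ : ∀ t ∈ Icc (0:ℝ) 1, HasDerivAt ψ (ψ₁ t) t := by
    intro t ht
    have hat : DifferentiableAt ℝ φ (γ t) :=
      hφdiff.differentiableAt (hU.mem_nhds (hmemU t ht))
    exact hat.hasFDerivAt.comp_hasDerivAt t (hγd t)
  have hψ₁ : ∀ t ∈ Icc (0:ℝ) 1,
      HasDerivAt ψ₁ (fderiv ℝ (fderiv ℝ φ) (γ t) z z) t := by
    intro t ht
    have hFt : DifferentiableAt ℝ (fderiv ℝ φ) (γ t) :=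
      hFdiff.differentiableAt (hU.mem_nhds (hmemU t ht))
    have h1 : HasDerivAt (fun t => fderiv ℝ φ (γ t)) (fderiv ℝ (fderiv ℝ φ) (γ t) z) t :=
      hFt.hasFDerivAt.comp_hasDerivAt t (hγd t)
    exact ((ContinuousLinearMap.apply ℝ ℝ z).hasFDerivAt).comp_hasDerivAt t h1
  have hMt : ∀ t ∈ Icc (0:ℝ) 1, |fderiv ℝ (fderiv ℝ φ) (γ t) z z| ≤ M :=
    fun t ht => hM (γ t) (hγs t ht)
  have hMlin : ∀ t : ℝ, HasDerivAt (fun t : ℝ => M * t) M t := by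
    intro t; simpa using (hasDerivAt_id t).const_mul M
  have hA1 : ∀ t ∈ Icc (0:ℝ) 1, ψ₁ t - ψ₁ 0 ≤ M * t := by
    have := decr_aux (fun t => ψ₁ t - M * t)
      (fun t => fderiv ℝ (fderiv ℝ φ) (γ t) z z - M)
      (fun t ht => (hψ₁ t ht).sub (hMlin t))
      (fun t ht => by
        have := (abs_le.1 (hMt t (Ioo_subset_Icc_self ht))).2; linarith)
    intro t ht
    have h := this t ht
    simp only [mul_zero] at h
    linarith
  have hA2 : ∀ t ∈ Icc (0:ℝ) 1, ψ₁ 0 - ψ₁ t ≤ M * t := by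
    have := decr_aux (fun t => -ψ₁ t - M * t)
      (fun t => -(fderiv ℝ (fderiv ℝ φ) (γ t) z z) - M)
      (fun t ht => ((hψ₁ t ht).neg).sub (hMlin t))
      (fun t ht => by
        have := (abs_le.1 (hMt t (Ioo_subset_Icc_self ht))).1; linarith)
    intro t ht
    have h := this t ht
    simp only [mul_zero] at h
    linarith
  have hquad : ∀ t : ℝ, HasDerivAt (fun t : ℝ => M / 2 * t ^ 2) (M * t) t := by
    intro t
    have h := (hasDerivAt_pow 2 t).const_mul (M / 2)
    exact h.congr_deriv (by push_cast; ring)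
  have hB1 : ψ 1 - ψ 0 - ψ₁ 0 ≤ M / 2 := by
    have := decr_aux (fun t => ψ t - ψ₁ 0 * t - M / 2 * t ^ 2)
      (fun t => ψ₁ t - ψ₁ 0 - M * t)
      (fun t ht => ((hψ t ht).sub (by simpa using (hasDerivAt_id t).const_mul (ψ₁ 0))).sub
        (hquad t))
      (fun t ht => by
        have := hA1 t (Ioo_subset_Icc_self ht); linarith)
    have h := this 1 (right_mem_Icc.2 zero_le_one)
    simp only [mul_zero, mul_one, one_pow] at h
    linarith [h]
  have hB2 : -(M / 2) ≤ ψ 1 - ψ 0 - ψ₁ 0 := by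
    have := decr_aux (fun t => -ψ t + ψ₁ 0 * t - M / 2 * t ^ 2)
      (fun t => -ψ₁ t + ψ₁ 0 - M * t)
      (fun t ht => (((hψ t ht).neg).add (by simpa using (hasDerivAt_id t).const_mul (ψ₁ 0))).sub
        (hquad t))
      (fun t ht => by
        have := hA2 t (Ioo_subset_Icc_self ht); linarith)
    have h := this 1 (right_mem_Icc.2 zero_le_one)
    simp only [mul_zero, mul_one, one_pow] at h
    linarith [h]
  have e1 : ψ 1 = φ b := by simp [hψdef, hγdef, hzdef]
  have e0 : ψ 0 = φ a := by simp [hψdef, hγdef]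
  have eψ₁0 : ψ₁ 0 = fderiv ℝ φ a z := by simp [hψ₁def, hγdef]
  rw [abs_le]
  rw [e1, e0, eψ₁0] at hB1 hB2
  exact ⟨by linarith, by linarith⟩

lemma rep_convexHull {m : ℕ} {E : Type*} [AddCommGroup E] [Module ℝ E]
    (x : Fin m → E) (y : E) (hy : y ∈ convexHull ℝ (Set.range x)) :
    ∃ α : Fin m → ℝ, (∀ j, 0 ≤ α j) ∧ ∑ j, α j = 1 ∧ ∑ j, α j • x j = y := by
  rw [convexHull_range_eq_exists_affineCombination] at hy
  obtain ⟨s, w, hw0, hw1, rfl⟩ := hy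
  refine ⟨fun j => if j ∈ s then w j else 0, fun j => ?_, ?_, ?_⟩
  · by_cases h : j ∈ s <;> simp [h]
    exact hw0 j h
  · rw [Finset.sum_ite_mem, Finset.univ_inter]
    exact hw1
  · rw [Finset.affineCombination_eq_linear_combination s x w hw1]
    simp only [ite_smul, zero_smul]
    rw [Finset.sum_ite_mem, Finset.univ_inter]

end Aux

/-- per-vertex decrease conditions imply `D⁺V(x) ≤ −b₂ V(x)` on the simplex. -/
theorem stmt2 (n : ℕ)
    (x : Fin (n + 1) → EuclideanSpace ℝ (Fin n))
    (hx : LinearIndependent ℝ (fun j : Fin n => x j.succ - x 0))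
    (g : EuclideanSpace ℝ (Fin n) → EuclideanSpace ℝ (Fin n))
    (U : Set (EuclideanSpace ℝ (Fin n))) (hU : IsOpen U)
    (hσU : convexHull ℝ (Set.range x) ⊆ U)
    (hg : ContDiffOn ℝ 2 g U)
    (β : ℝ) (hβ0 : 0 ≤ β)
    (hβ : ∀ ξ ∈ convexHull ℝ (Set.range x), ∀ p q r : Fin n,
      |secondPartial (fun y => g y p) q r ξ| ≤ β)
    (V : EuclideanSpace ℝ (Fin n) → ℝ) (gradV : Fin n → ℝ) (ω : ℝ)
    (hV : ∀ y, V y = (∑ i, gradV i * y i) + ω)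
    (l : Fin n → ℝ) (hl : ∀ i, |gradV i| ≤ l i)
    (c : Fin (n + 1) → ℝ)
    (hc : ∀ j, c j = ((n : ℝ) / 2) * ‖x j - x 0‖ *
      ((⨆ k : Fin n, ‖x k.succ - x 0‖) + ‖x j - x 0‖))
    (b₂ : ℝ)
    (hVpos : ∀ j, 0 ≤ V (x j))
    (hvert : ∀ j, (∑ i, g (x j) i * gradV i) + c j * β * (∑ i, l i) ≤ -b₂ * V (x j)) :
    ∀ y ∈ convexHull ℝ (Set.range x), diniDeriv V g y ≤ ((-b₂ * V y : ℝ) : EReal) := by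
  intro y hy
  set σ := convexHull ℝ (Set.range x) with hσdef
  have hσconv : Convex ℝ σ := convex_convexHull ℝ _
  have hxσ : ∀ j, x j ∈ σ := fun j => subset_convexHull ℝ _ ⟨j, rfl⟩
  obtain ⟨α, hα0, hα1, hαy⟩ := rep_convexHull x y hy
  set D : ℝ := ∑ i, g y i * gradV i with hD
  -- Step 0 : the Dini derivative is exactly D
  have hdini : diniDeriv V g y = ((D : ℝ) : EReal) := by
    unfold diniDeriv
    have hev : ∀ᶠ h in 𝓝[>] (0:ℝ),
        (((V (y + h • g y) - V y) / h : ℝ) : EReal) = ((D : ℝ) : EReal) := by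
      filter_upwards [self_mem_nhdsWithin] with h hh
      have hh0 : (h:ℝ) ≠ 0 := ne_of_gt hh
      have hnum : V (y + h • g y) - V y = h * D := by
        rw [hV, hV]
        have happ : ∀ i, (y + h • g y) i = y i + h * g y i := fun i => rfl
        simp only [happ]
        have e : ∀ i, gradV i * (y i + h * g y i)
            = gradV i * y i + h * (g y i * gradV i) := fun i => by ring
        rw [Finset.sum_congr rfl (fun i _ => e i), Finset.sum_add_distrib, ← Finset.mul_sum]
        ring
      rw [hnum, mul_comm h D, mul_div_assoc, div_self hh0, mul_one]
    rw [Filter.limsup_congr hev]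
    exact Filter.limsup_const _
  -- geometry of the simplex
  set hmax : ℝ := ⨆ k : Fin n, ‖x k.succ - x 0‖ with hmaxdef
  have hmax0 : 0 ≤ hmax := Real.iSup_nonneg (fun k => norm_nonneg _)
  have hj_le : ∀ j, ‖x j - x 0‖ ≤ hmax := by
    intro j
    induction j using Fin.cases with
    | zero => simpa using hmax0
    | succ k =>
      have hb : BddAbove (Set.range fun k : Fin n => ‖x k.succ - x 0‖) :=
        Set.Finite.bddAbove (Set.finite_range _)
      exact le_ciSup hb k
  have hc0 : ∀ j, 0 ≤ c j := fun j => by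
    rw [hc j]
    have h1 := norm_nonneg (x j - x 0)
    positivity
  set S : ℝ := ∑ j, α j * ‖x j - x 0‖ with hSdef
  have hS0 : 0 ≤ S := Finset.sum_nonneg fun j _ => mul_nonneg (hα0 j) (norm_nonneg _)
  have hS_le : S ≤ hmax := by
    calc S ≤ ∑ j, α j * hmax :=
          Finset.sum_le_sum fun j _ => mul_le_mul_of_nonneg_left (hj_le j) (hα0 j)
      _ = hmax := by rw [← Finset.sum_mul, hα1, one_mul]
  have ydiff : ∑ j, α j • (x j - x 0) = y - x 0 := by
    simp only [smul_sub]
    rw [Finset.sum_sub_distrib, hαy, ← Finset.sum_smul, hα1, one_smul]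
  have hynorm : ‖y - x 0‖ ≤ S := by
    rw [← ydiff]
    refine (norm_sum_le _ _).trans ?_
    refine le_of_eq (Finset.sum_congr rfl fun j _ => ?_)
    rw [norm_smul, Real.norm_eq_abs, abs_of_nonneg (hα0 j)]
  have hynorm_sq : ‖y - x 0‖^2 ≤ S * hmax := by
    nlinarith [norm_nonneg (y - x 0)]
  set K : ℝ := ∑ j, α j * c j with hKdef
  have hK0 : 0 ≤ K := Finset.sum_nonneg fun j _ => mul_nonneg (hα0 j) (hc0 j)
  -- per-component interpolation error bound
  have hEp : ∀ p : Fin n, |g y p - ∑ j, α j * g (x j) p| ≤ β * K := by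
    intro p
    set φ : EuclideanSpace ℝ (Fin n) → ℝ := fun w => g w p with hφdef
    have hφC : ContDiffOn ℝ 2 φ U := (EuclideanSpace.proj p :
      EuclideanSpace ℝ (Fin n) →L[ℝ] ℝ).contDiff.comp_contDiffOn hg
    have hF : ContDiffOn ℝ 1 (fderiv ℝ φ) U := hφC.fderiv_of_isOpen hU (by norm_num)
    have hFdiff : DifferentiableOn ℝ (fderiv ℝ φ) U := hF.differentiableOn (by norm_num)
    have hhess : ∀ (z : EuclideanSpace ℝ (Fin n)), ∀ ξ ∈ σ,
        |fderiv ℝ (fderiv ℝ φ) ξ z z| ≤ β * ((n:ℝ) * ‖z‖^2) := by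
      intro z ξ hξ
      exact hess_bound φ ξ (hFdiff.differentiableAt (hU.mem_nhds (hσU hξ))) β hβ0
        (fun q r => hβ ξ hξ p q r) z
    set L : EuclideanSpace ℝ (Fin n) →L[ℝ] ℝ := fderiv ℝ φ (x 0) with hLdef
    have hRj : ∀ j, |φ (x j) - φ (x 0) - L (x j - x 0)|
        ≤ β * ((n:ℝ) * ‖x j - x 0‖^2) / 2 := fun j =>
      taylor_key φ U hU hφC σ hσconv hσU (x 0) (x j) (hxσ 0) (hxσ j) _
        (fun ξ hξ => hhess _ ξ hξ)
    have hRy : |φ y - φ (x 0) - L (y - x 0)| ≤ β * ((n:ℝ) * ‖y - x 0‖^2) / 2 :=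
      taylor_key φ U hU hφC σ hσconv hσU (x 0) y (hxσ 0) hy _
        (fun ξ hξ => hhess _ ξ hξ)
    have hLsum : ∑ j, α j * L (x j - x 0) = L (y - x 0) := by
      rw [← ydiff, map_sum]
      exact Finset.sum_congr rfl fun j _ => by rw [map_smul, smul_eq_mul]
    have hident : g y p - ∑ j, α j * g (x j) p
        = (φ y - φ (x 0) - L (y - x 0))
          - ∑ j, α j * (φ (x j) - φ (x 0) - L (x j - x 0)) := by
      have expand : ∑ j, α j * (φ (x j) - φ (x 0) - L (x j - x 0))
          = ∑ j, α j * φ (x j) - φ (x 0) - L (y - x 0) := by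
        have e : ∀ j, α j * (φ (x j) - φ (x 0) - L (x j - x 0))
            = α j * φ (x j) - α j * φ (x 0) - α j * L (x j - x 0) := fun j => by ring
        rw [Finset.sum_congr rfl (fun j _ => e j), Finset.sum_sub_distrib,
          Finset.sum_sub_distrib, ← Finset.sum_mul, hα1, one_mul, hLsum]
      rw [expand]
      have : φ y = g y p := rfl
      have h2 : ∀ j, φ (x j) = g (x j) p := fun j => rfl
      simp only [this, h2]
      ring
    rw [hident]
    have habs : |(φ y - φ (x 0) - L (y - x 0))
        - ∑ j, α j * (φ (x j) - φ (x 0) - L (x j - x 0))|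
        ≤ β * ((n:ℝ) * ‖y - x 0‖^2) / 2
          + ∑ j, α j * (β * ((n:ℝ) * ‖x j - x 0‖^2) / 2) := by
      refine (abs_sub _ _).trans (add_le_add hRy ?_)
      refine (Finset.abs_sum_le_sum_abs _ _).trans (Finset.sum_le_sum fun j _ => ?_)
      rw [abs_mul, abs_of_nonneg (hα0 j)]
      exact mul_le_mul_of_nonneg_left (hRj j) (hα0 j)
    refine habs.trans ?_
    have hKsplit : β * K = β * ((n:ℝ)/2) * hmax * S
        + ∑ j, α j * (β * ((n:ℝ) * ‖x j - x 0‖^2) / 2) := by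
      rw [hKdef, Finset.mul_sum, hSdef, Finset.mul_sum, ← Finset.sum_add_distrib]
      refine Finset.sum_congr rfl fun j _ => ?_
      rw [hc j]
      ring
    rw [hKsplit]
    have : β * ((n:ℝ) * ‖y - x 0‖^2) / 2 ≤ β * ((n:ℝ)/2) * hmax * S := by
      have hn0 : (0:ℝ) ≤ (n:ℝ) := Nat.cast_nonneg n
      nlinarith [hynorm_sq, mul_nonneg hβ0 hn0]
    linarith
  -- final chain
  have hl0 : ∀ i, 0 ≤ l i := fun i => le_trans (abs_nonneg _) (hl i)
  have hsuml0 : 0 ≤ ∑ i, l i := Finset.sum_nonneg fun i _ => hl0 i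
  have hkey : D ≤ -b₂ * V y := by
    have hstep : ∀ i, g y i * gradV i
        ≤ (∑ j, α j * g (x j) i) * gradV i + (β * K) * l i := by
      intro i
      have h1 : (g y i - ∑ j, α j * g (x j) i) * gradV i
          ≤ |g y i - ∑ j, α j * g (x j) i| * |gradV i| := by
        calc (g y i - ∑ j, α j * g (x j) i) * gradV i
            ≤ |(g y i - ∑ j, α j * g (x j) i) * gradV i| := le_abs_self _
          _ = |g y i - ∑ j, α j * g (x j) i| * |gradV i| := abs_mul _ _
      have h2 : |g y i - ∑ j, α j * g (x j) i| * |gradV i| ≤ (β * K) * l i :=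
        mul_le_mul (hEp i) (hl i) (abs_nonneg _) (mul_nonneg hβ0 hK0)
      have h3 : (g y i - ∑ j, α j * g (x j) i) * gradV i
          = g y i * gradV i - (∑ j, α j * g (x j) i) * gradV i := by ring
      linarith
    have hsum1 : D ≤ ∑ i, (∑ j, α j * g (x j) i) * gradV i + (β * K) * (∑ i, l i) := by
      rw [hD, Finset.mul_sum, ← Finset.sum_add_distrib]
      exact Finset.sum_le_sum fun i _ => hstep i
    have hswap : ∑ i, (∑ j, α j * g (x j) i) * gradV i
        = ∑ j, α j * (∑ i, g (x j) i * gradV i) := by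
      simp_rw [Finset.sum_mul, Finset.mul_sum]
      rw [Finset.sum_comm]
      exact Finset.sum_congr rfl fun j _ =>
        Finset.sum_congr rfl fun i _ => by ring
    have hvert' : ∀ j, α j * (∑ i, g (x j) i * gradV i)
        ≤ α j * (-b₂ * V (x j)) - α j * (c j * β * (∑ i, l i)) := by
      intro j
      have h5 := mul_le_mul_of_nonneg_left (hvert j) (hα0 j)
      have h4 : α j * ((∑ i, g (x j) i * gradV i) + c j * β * (∑ i, l i))
          = α j * (∑ i, g (x j) i * gradV i) + α j * (c j * β * (∑ i, l i)) := by ring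
      linarith
    have hVy : V y = ∑ j, α j * V (x j) := by
      have hyi : ∀ i, y i = ∑ j, α j * (x j) i := by
        intro i
        rw [← hαy, WithLp.ofLp_sum, Finset.sum_apply]
        rfl
      rw [hV y]
      have e : ∀ j, α j * V (x j) = (∑ i, α j * (gradV i * (x j) i)) + α j * ω := fun j => by
        rw [hV (x j), mul_add, Finset.mul_sum]
      rw [Finset.sum_congr rfl (fun j _ => e j), Finset.sum_add_distrib, ← Finset.sum_mul,
        hα1, one_mul, Finset.sum_comm]
      congr 1
      refine Finset.sum_congr rfl fun i _ => ?_
      rw [hyi i, Finset.mul_sum]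
      exact Finset.sum_congr rfl fun j _ => by ring
    have hKsum : ∑ j, α j * (c j * β * (∑ i, l i)) = (β * K) * (∑ i, l i) := by
      have h6 : ∑ j, α j * (c j * β * (∑ i, l i))
          = ∑ j, (α j * c j) * (β * (∑ i, l i)) :=
        Finset.sum_congr rfl fun j _ => by ring
      rw [h6, ← Finset.sum_mul, ← hKdef]
      ring
    calc D ≤ ∑ i, (∑ j, α j * g (x j) i) * gradV i + (β * K) * (∑ i, l i) := hsum1
      _ = ∑ j, α j * (∑ i, g (x j) i * gradV i) + (β * K) * (∑ i, l i) := by rw [hswap]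
      _ ≤ (∑ j, (α j * (-b₂ * V (x j)) - α j * (c j * β * (∑ i, l i))))
            + (β * K) * (∑ i, l i) := by
          exact add_le_add_left (Finset.sum_le_sum fun j _ => hvert' j) _
      _ = ∑ j, α j * (-b₂ * V (x j)) := by
          rw [Finset.sum_sub_distrib, hKsum]; ring
      _ = -b₂ * V y := by
          rw [hVy, Finset.mul_sum]
          exact Finset.sum_congr rfl fun j _ => by ring
  rw [hdini]
  exact_mod_cast hkey
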